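/- Let r ≥ 1 be an integer, V a vector space over ℝ, W a linear subspace of V with dim W ≥ r + 1, and φ : V → V a linear map such that φ(w₁) ∧ ⋯ ∧ φ(w_r) = w₁ ∧ ⋯ ∧ w_r in the r-th exterior power ⋀^r V for all vectors w₁, …, w_r ∈ W. Then W is φ-invariant and the restriction of φ to W is ε·id_W for some ε ∈ {1, −1}; that is, there exists ε ∈ ℝ with ε = 1 or ε = −1 such that φ(w) = ε·w for all w ∈ W. -/

import Mathlib

open ExteriorAlgebra

/-- Dual coordinate family for a linearly independent family. -/
private lemma aux_dual_family {V : Type*} [AddCommGroup V] [Module ℝ V] {n : ℕ}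
    {v : Fin n → V} (hv : LinearIndependent ℝ v) :
    ∃ g : V →ₗ[ℝ] (Fin n → ℝ), ∀ i, g (v i) = Pi.single i 1 := by
  let B := Module.Basis.span hv
  let f : Submodule.span ℝ (Set.range v) →ₗ[ℝ] (Fin n → ℝ) :=
    B.constr ℝ (fun i => Pi.single i 1)
  obtain ⟨g, hg⟩ := LinearMap.exists_extend f
  refine ⟨g, fun i => ?_⟩
  have h1 : v i = (Submodule.span ℝ (Set.range v)).subtype (B i) := by
    simp [B, Module.Basis.span_apply]
  rw [h1, ← LinearMap.comp_apply, hg]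
  exact Module.Basis.constr_basis B ℝ _ i

/-- The wedge of a linearly independent family is nonzero. -/
private lemma aux_iMulti_ne_zero {V : Type*} [AddCommGroup V] [Module ℝ V] {n : ℕ}
    {v : Fin n → V} (hv : LinearIndependent ℝ v) :
    ExteriorAlgebra.ιMulti ℝ n v ≠ 0 := by
  obtain ⟨g, hg⟩ := aux_dual_family hv
  set F : V [⋀^Fin n]→ₗ[ℝ] ℝ := (Matrix.detRowAlternating).compLinearMap g with hF
  have hFv : F v = 1 := by
    have h2 : (fun i => g (v i)) = (1 : Matrix (Fin n) (Fin n) ℝ) := by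
      ext i j
      rw [hg]
      simp [Matrix.one_apply, Pi.single_apply, eq_comm]
    simp only [hF, AlternatingMap.compLinearMap_apply, Matrix.detRowAlternating]
    show Matrix.det (fun i => g (v i)) = 1
    rw [h2, Matrix.det_one]
  intro h
  set fam : ∀ i, V [⋀^Fin i]→ₗ[ℝ] ℝ :=
    Function.update (fun i => (0 : V [⋀^Fin i]→ₗ[ℝ] ℝ)) n F with hfam
  have := ExteriorAlgebra.liftAlternating_apply_ιMulti fam v
  rw [h, map_zero] at this
  rw [hfam, Function.update_self, hFv] at this
  exact one_ne_zero this.symm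

private lemma aux_iMulti_cons {V : Type*} [AddCommGroup V] [Module ℝ V] {n : ℕ}
    (x : V) (v : Fin n → V) :
    ExteriorAlgebra.ιMulti ℝ (n + 1) (Fin.cons x v) =
      ExteriorAlgebra.ι ℝ x * ExteriorAlgebra.ιMulti ℝ n v := by
  rw [ExteriorAlgebra.ιMulti_succ_apply]
  congr 1

/-- If `ι x * (v₁ ∧ ⋯ ∧ vₙ) = 0` with `v` linearly independent, then `x ∈ span v`. -/
private lemma aux_mem_span_of_wedge {V : Type*} [AddCommGroup V] [Module ℝ V] {n : ℕ}
    {v : Fin n → V} (hv : LinearIndependent ℝ v) {x : V}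
    (h : ExteriorAlgebra.ι ℝ x * ExteriorAlgebra.ιMulti ℝ n v = 0) :
    x ∈ Submodule.span ℝ (Set.range v) := by
  by_contra hx
  have hli : LinearIndependent ℝ (Fin.cons x v) :=
    (linearIndependent_fin_cons).2 ⟨hv, hx⟩
  exact aux_iMulti_ne_zero hli ((aux_iMulti_cons x v).trans h)

/-- If two wedges agree and `v` is linearly independent, each `u i` lies in the span of `v`. -/
private lemma aux_comp_mem_span {V : Type*} [AddCommGroup V] [Module ℝ V] {n : ℕ}
    {u v : Fin n → V} (hv : LinearIndependent ℝ v)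
    (h : ExteriorAlgebra.ιMulti ℝ n u = ExteriorAlgebra.ιMulti ℝ n v) (i : Fin n) :
    u i ∈ Submodule.span ℝ (Set.range v) := by
  apply aux_mem_span_of_wedge hv
  rw [← h, ← aux_iMulti_cons]
  exact AlternatingMap.map_eq_zero_of_eq _ (Fin.cons (u i) u)
    (i := 0) (j := i.succ) (by simp) (Fin.succ_ne_zero i).symm

/-- Extend a nonzero vector to a linearly independent family of size `n + 1`. -/
private lemma aux_exists_indep_family {M : Type*} [AddCommGroup M] [Module ℝ M] (n : ℕ)
    (hrank : (((n + 1 : ℕ) : Cardinal)) ≤ Module.rank ℝ M) {x : M} (hx : x ≠ 0) :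
    ∃ b : Fin (n + 1) → M, b 0 = x ∧ LinearIndependent ℝ b := by
  induction n with
  | zero =>
    haveI : Unique (Fin (0 + 1)) := by show Unique (Fin 1); infer_instance
    exact ⟨fun _ => x, rfl, linearIndependent_unique_iff.2 hx⟩
  | succ n ih =>
    obtain ⟨b, hb0, hb⟩ := ih (le_trans (Nat.cast_le.mpr (Nat.le_succ (n + 1))) hrank)
    have hlt : ((n + 1 : ℕ) : Cardinal) < Module.rank ℝ M :=
      lt_of_lt_of_le (Nat.cast_lt.mpr (Nat.lt_succ_self (n + 1))) hrank
    obtain ⟨y, hy⟩ := exists_linearIndependent_snoc_of_lt_rank hb hlt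
    refine ⟨Fin.snoc b y, ?_, hy⟩
    rw [show (0 : Fin (n + 2)) = Fin.castSucc 0 from rfl, Fin.snoc_castSucc, hb0]

/-- **Lemma (rigidity).** Let `r ≥ 1`, `V` a real vector space, `W ≤ V` with
`dim W ≥ r + 1`, and `φ : V → V` linear such that
`φ w₁ ∧ ⋯ ∧ φ w_r = w₁ ∧ ⋯ ∧ w_r` in `⋀^r V` for all `w₁, …, w_r ∈ W`.
Then `W` is `φ`-invariant and `φ|_W = ε • id` for some `ε ∈ {1, -1}`. -/
theorem stmt_0 (r : ℕ) (hr : 1 ≤ r) (V : Type*) [AddCommGroup V] [Module ℝ V]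
    (W : Submodule ℝ V) (hW : (r + 1 : Cardinal) ≤ Module.rank ℝ W)
    (φ : V →ₗ[ℝ] V)
    (hφ : ∀ w : Fin r → V, (∀ i, w i ∈ W) →
      ExteriorAlgebra.ιMulti ℝ r (fun i => φ (w i)) = ExteriorAlgebra.ιMulti ℝ r w) :
    (∀ w ∈ W, φ w ∈ W) ∧
      ∃ ε : ℝ, (ε = 1 ∨ ε = -1) ∧ ∀ w ∈ W, φ w = ε • w := by
  -- Step 1: every nonzero `w ∈ W` is an eigenvector of `φ`.
  have eigen : ∀ w ∈ W, w ≠ 0 → ∃ c : ℝ, φ w = c • w := by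
    intro w hwW hw0
    obtain ⟨b, hb0, hb⟩ := aux_exists_indep_family (M := W) r (by exact_mod_cast hW)
      (x := ⟨w, hwW⟩) (by simpa using hw0)
    set vv : Fin (r + 1) → V := fun i => (b i : V) with hvv
    have hvvW : ∀ i, vv i ∈ W := fun i => (b i).2
    have hvv0 : vv 0 = w := by rw [hvv]; simp [hb0]
    have hvvli : LinearIndependent ℝ vv := hb.map' W.subtype W.ker_subtype
    obtain ⟨g, hg⟩ := aux_dual_family hvvli
    -- the families omitting index `j.succ`
    have key : ∀ j : Fin r, φ w ∈ Submodule.span ℝ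
        (Set.range fun i : Fin r => vv ((Fin.succ j).succAbove i)) := by
      intro j
      set F : Fin r → V := fun i => vv ((Fin.succ j).succAbove i) with hFdef
      have hFli : LinearIndependent ℝ F :=
        hvvli.comp _ (Fin.succAbove_right_injective)
      have h6 : (Fin.succ j).succAbove (⟨0, hr⟩ : Fin r) = 0 := by
        rw [Fin.succAbove_of_castSucc_lt]
        · ext; simp
        · rw [Fin.lt_def]
          simp
      have hF0 : F (⟨0, hr⟩ : Fin r) = w := by rw [hFdef]; simp only []; rw [h6, hvv0]
      have h7 := hφ F (fun i => hvvW _)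
      have hmem := aux_comp_mem_span hFli h7 (⟨0, hr⟩ : Fin r)
      rwa [hF0] at hmem
    -- coordinates of φ w vanish at indices `j.succ`
    have hcoord : ∀ j : Fin r, g (φ w) (Fin.succ j) = 0 := by
      intro j
      obtain ⟨d, hd⟩ := (Submodule.mem_span_range_iff_exists_fun ℝ).1 (key j)
      rw [← hd, map_sum]
      simp only [Finset.sum_apply]
      refine Finset.sum_eq_zero fun i _ => ?_
      rw [map_smul, hg]
      have hne : (Fin.succ j).succAbove i ≠ Fin.succ j := Fin.succAbove_ne _ i
      simp [Pi.single_apply, hne]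
    -- φ w lies in the span of vv, and equals the sum of its coordinates
    have hmemv : φ w ∈ Submodule.span ℝ (Set.range vv) := by
      have h1 := key (⟨0, hr⟩ : Fin r)
      refine Submodule.span_mono ?_ h1
      rintro _ ⟨i, rfl⟩
      exact ⟨_, rfl⟩
    obtain ⟨c', hc'⟩ := (Submodule.mem_span_range_iff_exists_fun ℝ).1 hmemv
    have hgc : g (φ w) = c' := by
      rw [← hc', map_sum]
      funext k
      simp only [Finset.sum_apply, map_smul, hg, Pi.smul_apply, smul_eq_mul]
      simp [Pi.single_apply, mul_ite]
    refine ⟨c' 0, ?_⟩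
    have hcz : ∀ j : Fin r, c' (Fin.succ j) = 0 := by
      intro j
      rw [← hgc]; exact hcoord j
    rw [← hc', Fin.sum_univ_succ]
    rw [Finset.sum_eq_zero (fun j _ => by rw [hcz j, zero_smul]), add_zero, hvv0]
  -- Step 2: the eigenvalue is constant on `W`.
  have hnt : Nontrivial W := by
    rw [← rank_pos_iff_nontrivial (R := ℝ)]
    refine lt_of_lt_of_le ?_ hW
    exact lt_of_lt_of_le zero_lt_one (by simp)
  obtain ⟨u₀, hu0⟩ := exists_ne (0 : W)
  have huW : (u₀ : V) ∈ W := u₀.2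
  have hu0' : (u₀ : V) ≠ 0 := fun h => hu0 (Subtype.ext h)
  obtain ⟨ε, hε⟩ := eigen _ huW hu0'
  have heig : ∀ w ∈ W, φ w = ε • w := by
    intro w hwW
    by_cases hw0 : w = 0
    · simp [hw0]
    by_cases hsp : w ∈ Submodule.span ℝ {(u₀ : V)}
    · obtain ⟨t, rfl⟩ := Submodule.mem_span_singleton.1 hsp
      rw [map_smul, hε, smul_comm]
    · obtain ⟨c, hc⟩ := eigen w hwW hw0
      have hsum0 : w + (u₀ : V) ≠ 0 := by
        intro h
        apply hsp
        rw [show w = -(u₀ : V) by linear_combination (norm := module) h]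
        exact Submodule.neg_mem _ (Submodule.mem_span_singleton_self _)
      obtain ⟨c'', hc''⟩ := eigen _ (W.add_mem hwW huW) hsum0
      rw [map_add, hc, hε, smul_add] at hc''
      have hrel : (c'' - c) • w = (ε - c'') • (u₀ : V) := by
        rw [sub_smul, sub_smul]
        linear_combination (norm := module) -hc''
      have hcc : c'' = c := by
        by_contra hne
        apply hsp
        have h8 : w = ((c'' - c)⁻¹ * (ε - c'')) • (u₀ : V) := by
          rw [mul_smul, ← hrel, smul_smul, inv_mul_cancel₀ (sub_ne_zero.2 hne), one_smul]
        rw [h8]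
        exact Submodule.smul_mem _ _ (Submodule.mem_span_singleton_self _)
      have hec : ε = c := by
        rw [hcc, sub_self, zero_smul] at hrel
        have h9 := (smul_eq_zero.1 hrel.symm).resolve_right hu0'
        have : ε - c = 0 := by rw [← hcc]; linarith [h9]
        linarith
      rw [hc, hec]
  -- Step 3: ε ^ r = 1, hence ε = ±1.
  have hεpow : ε ^ r = 1 := by
    obtain ⟨f, hf⟩ := exists_linearIndependent_of_le_rank (R := ℝ) (M := W) (n := r)
      (le_trans (by exact_mod_cast Nat.cast_le.2 (Nat.le_succ r) :
        ((r : ℕ) : Cardinal) ≤ ((r + 1 : ℕ) : Cardinal)) (by exact_mod_cast hW))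
    set vf : Fin r → V := fun i => (f i : V) with hvf
    have hvfli : LinearIndependent ℝ vf := hf.map' W.subtype W.ker_subtype
    have hne := aux_iMulti_ne_zero hvfli
    have h1 := hφ vf (fun i => (f i).2)
    have h2 : (fun i => φ (vf i)) = fun i => ε • vf i := by
      funext i; exact heig _ (f i).2
    rw [h2] at h1
    have h3 := (ExteriorAlgebra.ιMulti ℝ r (M := V)).toMultilinearMap.map_smul_univ
      (fun _ => ε) vf
    simp only [Finset.prod_const, Finset.card_univ, Fintype.card_fin] at h3
    have h4 : (ε ^ r) • ExteriorAlgebra.ιMulti ℝ r vf = ExteriorAlgebra.ιMulti ℝ r vf := by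
      conv_rhs => rw [← h1]
      exact h3.symm
    by_contra hne1
    have h5 : (ε ^ r - 1) • ExteriorAlgebra.ιMulti ℝ r vf = 0 := by
      rw [sub_smul, one_smul, h4, sub_self]
    exact hne ((smul_eq_zero.1 h5).resolve_left (sub_ne_zero.2 hne1))
  refine ⟨fun w hw => ?_, ε, ?_, heig⟩
  · rw [heig w hw]; exact W.smul_mem _ hw
  · rcases (pow_eq_one_iff_of_ne_zero (by omega : r ≠ 0)).1 hεpow with h | h
    · exact Or.inl h
    · exact Or.inr h.1
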